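/- arXiv:2503.07965 — 2 statements merged into one kernel-verified Lean document; each statement's English description precedes it below -/
import Mathlib

section
/- Two ellipsoids El(M) = {z ∈ ℝ^{2n} : zᵀ M z ≤ 1} and El(M′), with M, M′ symmetric positive definite, are mapped to one another by some linear symplectomorphism (i.e., there exists A ∈ Sp(2n,ℝ) with A(El(M′)) = El(M)) if and only if M and M′ have the same symplectic eigenvalues. -/
open Matrix MeasureTheory BigOperators

noncomputable def stdJ (n : ℕ) : Matrix (Fin n ⊕ Fin n) (Fin n ⊕ Fin n) ℝ :=
  Matrix.fromBlocks 0 1 (-1) 0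

def IsSymplectic {n : ℕ} (S : Matrix (Fin n ⊕ Fin n) (Fin n ⊕ Fin n) ℝ) : Prop :=
  Sᵀ * stdJ n * S = stdJ n

def IsWilliamsonEigs {n : ℕ} (M : Matrix (Fin n ⊕ Fin n) (Fin n ⊕ Fin n) ℝ)
    (lam : Fin n → ℝ) : Prop :=
  (∀ i, 0 < lam i) ∧ ∃ S : Matrix (Fin n ⊕ Fin n) (Fin n ⊕ Fin n) ℝ, IsSymplectic S ∧
    Sᵀ * M * S = Matrix.fromBlocks (Matrix.diagonal lam) 0 0 (Matrix.diagonal lam)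

section Aux

open Polynomial

noncomputable def Dm {n : ℕ} (lam : Fin n → ℝ) : Matrix (Fin n ⊕ Fin n) (Fin n ⊕ Fin n) ℝ :=
  Matrix.fromBlocks (Matrix.diagonal lam) 0 0 (Matrix.diagonal lam)

lemma quad_conj {n : ℕ} (A B : Matrix (Fin n ⊕ Fin n) (Fin n ⊕ Fin n) ℝ)
    (w : (Fin n ⊕ Fin n) → ℝ) :
    (A.mulVec w) ⬝ᵥ B.mulVec (A.mulVec w) = w ⬝ᵥ (Aᵀ * B * A).mulVec w := by
  rw [show Aᵀ * B * A = Aᵀ * (B * A) from Matrix.mul_assoc _ _ _, ← Matrix.mulVec_mulVec,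
    ← Matrix.mulVec_mulVec, Matrix.dotProduct_mulVec w, Matrix.vecMul_transpose]

lemma stdJ_sq {n : ℕ} : stdJ n * stdJ n = -1 := by
  simp [stdJ, Matrix.fromBlocks_multiply, ← Matrix.fromBlocks_one]
  ext (i|i) (j|j) <;> simp [Matrix.fromBlocks]

lemma stdJ_det_ne {n : ℕ} : (stdJ n).det ≠ 0 := by
  intro h
  have := congrArg Matrix.det (stdJ_sq (n := n))
  rw [Matrix.det_mul, h, mul_zero] at this
  have h2 : ((-1 : Matrix (Fin n ⊕ Fin n) (Fin n ⊕ Fin n) ℝ)).det = 1 := by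
    rw [show ((-1 : Matrix (Fin n ⊕ Fin n) (Fin n ⊕ Fin n) ℝ)) = (-1 : ℝ) • 1 by simp,
      Matrix.det_smul, Matrix.det_one]
    simp [Fintype.card_sum]
  rw [h2] at this; norm_num at this

lemma symp_isUnit_det {n : ℕ} {S : Matrix (Fin n ⊕ Fin n) (Fin n ⊕ Fin n) ℝ}
    (hS : IsSymplectic S) : IsUnit S.det := by
  have := congrArg Matrix.det hS
  rw [Matrix.det_mul, Matrix.det_mul, Matrix.det_transpose] at this
  have hd : S.det ≠ 0 := by
    intro h; rw [h] at this; simp at this; exact stdJ_det_ne this.symm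
  exact isUnit_iff_ne_zero.mpr hd

lemma symp_mul {n : ℕ} {S T : Matrix (Fin n ⊕ Fin n) (Fin n ⊕ Fin n) ℝ}
    (hS : IsSymplectic S) (hT : IsSymplectic T) : IsSymplectic (S * T) := by
  unfold IsSymplectic at *
  rw [Matrix.transpose_mul]
  calc Tᵀ * Sᵀ * stdJ n * (S * T) = Tᵀ * (Sᵀ * stdJ n * S) * T := by
        simp only [Matrix.mul_assoc]
    _ = stdJ n := by rw [hS, hT]

lemma symp_inv {n : ℕ} {S : Matrix (Fin n ⊕ Fin n) (Fin n ⊕ Fin n) ℝ}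
    (hS : IsSymplectic S) : IsSymplectic S⁻¹ := by
  have hu := symp_isUnit_det hS
  have h1 : S * S⁻¹ = 1 := Matrix.mul_nonsing_inv S hu
  have h2 : S⁻¹ * S = 1 := Matrix.nonsing_inv_mul S hu
  unfold IsSymplectic at *
  have : stdJ n = S⁻¹ᵀ * (Sᵀ * stdJ n * S) * S⁻¹ := by
    rw [show S⁻¹ᵀ * (Sᵀ * stdJ n * S) * S⁻¹ = (S * S⁻¹)ᵀ * stdJ n * (S * S⁻¹) by
      rw [Matrix.transpose_mul]; simp only [Matrix.mul_assoc], h1]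
    simp
  rw [hS] at this; exact this.symm

lemma smul_quad {m : Type*} [Fintype m] (N : Matrix m m ℝ) (a : ℝ) (z : m → ℝ) :
    (a • z) ⬝ᵥ N.mulVec (a • z) = a^2 * (z ⬝ᵥ N.mulVec z) := by
  rw [Matrix.mulVec_smul, dotProduct_smul, smul_dotProduct]
  simp [smul_eq_mul]; ring

lemma ball_to_form {m : Type*} [Fintype m] {N N' : Matrix m m ℝ}
    (hpos : ∀ z, z ≠ 0 → 0 < z ⬝ᵥ N.mulVec z)
    (hball : ∀ z : m → ℝ, z ⬝ᵥ N.mulVec z ≤ 1 → z ⬝ᵥ N'.mulVec z ≤ 1)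
    (z : m → ℝ) : z ⬝ᵥ N'.mulVec z ≤ z ⬝ᵥ N.mulVec z := by
  by_cases hz : z = 0
  · simp [hz]
  · set c := z ⬝ᵥ N.mulVec z with hc
    have hcpos := hpos z hz
    have h1 : ((Real.sqrt c)⁻¹ • z) ⬝ᵥ N.mulVec ((Real.sqrt c)⁻¹ • z) ≤ 1 := by
      rw [smul_quad]
      rw [show ((Real.sqrt c)⁻¹)^2 = ((Real.sqrt c)^2)⁻¹ by rw [inv_pow],
        Real.sq_sqrt hcpos.le]
      rw [inv_mul_cancel₀ hcpos.ne']
    have h2 := hball _ h1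
    rw [smul_quad, show ((Real.sqrt c)⁻¹)^2 = ((Real.sqrt c)^2)⁻¹ by rw [inv_pow],
      Real.sq_sqrt hcpos.le] at h2
    calc z ⬝ᵥ N'.mulVec z = c * (c⁻¹ * (z ⬝ᵥ N'.mulVec z)) := by
          rw [← mul_assoc, mul_inv_cancel₀ (show c ≠ 0 from hcpos.ne'), one_mul]
      _ ≤ c * 1 := by
          apply mul_le_mul_of_nonneg_left h2 hcpos.le
      _ = c := mul_one c

lemma form_to_matrix {m : Type*} [Fintype m] [DecidableEq m] {N N' : Matrix m m ℝ}
    (hN : Nᵀ = N) (hN' : N'ᵀ = N')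
    (h : ∀ z : m → ℝ, z ⬝ᵥ N.mulVec z = z ⬝ᵥ N'.mulVec z) : N = N' := by
  have key : ∀ x y : m → ℝ, x ⬝ᵥ N.mulVec y = x ⬝ᵥ N'.mulVec y := by
    intro x y
    have sym : ∀ (B : Matrix m m ℝ), Bᵀ = B → y ⬝ᵥ B.mulVec x = x ⬝ᵥ B.mulVec y := by
      intro B hB
      rw [Matrix.dotProduct_mulVec y, ← Matrix.mulVec_transpose, hB, dotProduct_comm]
    have e1 := h (x + y)
    have ex := h x
    have ey := h y
    have expand : ∀ (B : Matrix m m ℝ), Bᵀ = B →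
        (x + y) ⬝ᵥ B.mulVec (x + y)
          = x ⬝ᵥ B.mulVec x + y ⬝ᵥ B.mulVec y + 2 * (x ⬝ᵥ B.mulVec y) := by
      intro B hB
      rw [Matrix.mulVec_add, add_dotProduct, dotProduct_add,
        dotProduct_add, sym B hB]
      ring
    rw [expand N hN, expand N' hN'] at e1
    linarith
  ext i j
  have := key (Pi.single i 1) (Pi.single j 1)
  simpa [Matrix.mulVec_single, single_dotProduct] using this

lemma det_JD {n : ℕ} (lam : Fin n → ℝ) {x : ℝ} (hx : x ≠ 0) :
    (x • (1 : Matrix (Fin n ⊕ Fin n) (Fin n ⊕ Fin n) ℝ) - stdJ n * Dm lam).det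
      = ∏ i, (x^2 + lam i ^ 2) := by
  have hJD : stdJ n * Dm lam
      = Matrix.fromBlocks 0 (Matrix.diagonal lam) (-(Matrix.diagonal lam)) 0 := by
    unfold stdJ Dm
    rw [Matrix.fromBlocks_multiply]
    simp only [Matrix.zero_mul, Matrix.mul_zero, Matrix.one_mul, Matrix.neg_mul,
      add_zero, zero_add, neg_zero]
  have hsm : (x • (1 : Matrix (Fin n) (Fin n) ℝ)) = Matrix.diagonal fun _ => x := by
    rw [Matrix.smul_eq_diagonal_mul]; simp
  have hform : x • (1 : Matrix (Fin n ⊕ Fin n) (Fin n ⊕ Fin n) ℝ) - stdJ n * Dm lam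
      = Matrix.fromBlocks (Matrix.diagonal fun _ => x) (-(Matrix.diagonal lam))
          (Matrix.diagonal lam) (Matrix.diagonal fun _ => x) := by
    rw [hJD, ← Matrix.fromBlocks_one, Matrix.fromBlocks_smul, hsm, sub_eq_add_neg,
      Matrix.fromBlocks_neg, Matrix.fromBlocks_add]
    simp
  rw [hform]
  have hinv : Invertible (Matrix.diagonal fun _ : Fin n => x) := by
    apply Matrix.invertibleOfIsUnitDet
    rw [Matrix.det_diagonal]
    exact isUnit_iff_ne_zero.mpr (Finset.prod_ne_zero_iff.mpr fun i _ => hx)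
  rw [Matrix.det_fromBlocks₂₂]
  have hinvof : (⅟(Matrix.diagonal fun _ : Fin n => x)) = Matrix.diagonal fun _ : Fin n => x⁻¹ := by
    apply invOf_eq_right_inv
    rw [Matrix.diagonal_mul_diagonal]
    simp [mul_inv_cancel₀ hx]
  rw [hinvof, Matrix.det_diagonal]
  have key : (Matrix.diagonal fun _ : Fin n => x) -
      (-(Matrix.diagonal lam)) * (Matrix.diagonal fun _ : Fin n => x⁻¹) * (Matrix.diagonal lam)
      = Matrix.diagonal (fun i => x + lam i * x⁻¹ * lam i) := by
    rw [Matrix.neg_mul, Matrix.diagonal_mul_diagonal, Matrix.neg_mul,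
      Matrix.diagonal_mul_diagonal, sub_neg_eq_add, Matrix.diagonal_add]
  rw [key, Matrix.det_diagonal, ← Finset.prod_mul_distrib]
  apply Finset.prod_congr rfl
  intro i _
  field_simp

lemma J_transpose_symp {n : ℕ} {T : Matrix (Fin n ⊕ Fin n) (Fin n ⊕ Fin n) ℝ}
    (hT : IsSymplectic T) : stdJ n * Tᵀ = T⁻¹ * stdJ n := by
  have hu := symp_isUnit_det hT
  have h1 : T * T⁻¹ = 1 := Matrix.mul_nonsing_inv T hu
  have hTJ : Tᵀ * stdJ n = stdJ n * T⁻¹ := by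
    calc Tᵀ * stdJ n = Tᵀ * stdJ n * (T * T⁻¹) := by rw [h1, Matrix.mul_one]
      _ = (Tᵀ * stdJ n * T) * T⁻¹ := by simp only [Matrix.mul_assoc]
      _ = stdJ n * T⁻¹ := by rw [hT]
  calc stdJ n * Tᵀ
      = -(stdJ n * Tᵀ * (stdJ n * stdJ n)) := by rw [stdJ_sq]; simp
    _ = -(stdJ n * (Tᵀ * stdJ n) * stdJ n) := by simp only [Matrix.mul_assoc]
    _ = -(stdJ n * (stdJ n * T⁻¹) * stdJ n) := by rw [hTJ]
    _ = -((stdJ n * stdJ n) * (T⁻¹ * stdJ n)) := by simp only [Matrix.mul_assoc]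
    _ = T⁻¹ * stdJ n := by rw [stdJ_sq]; simp

lemma det_shift_eq {n : ℕ} {T D D' : Matrix (Fin n ⊕ Fin n) (Fin n ⊕ Fin n) ℝ}
    (hT : IsSymplectic T) (hDD' : Tᵀ * D * T = D') (x : ℝ) :
    (x • (1 : Matrix (Fin n ⊕ Fin n) (Fin n ⊕ Fin n) ℝ) - stdJ n * D').det
      = (x • (1 : Matrix (Fin n ⊕ Fin n) (Fin n ⊕ Fin n) ℝ) - stdJ n * D).det := by
  have hu := symp_isUnit_det hT
  have h1 : T * T⁻¹ = 1 := Matrix.mul_nonsing_inv T hu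
  have h2 : T⁻¹ * T = 1 := Matrix.nonsing_inv_mul T hu
  have hsim : stdJ n * D' = T⁻¹ * (stdJ n * D) * T := by
    calc stdJ n * D' = stdJ n * (Tᵀ * D * T) := by rw [hDD']
      _ = (stdJ n * Tᵀ) * D * T := by simp only [Matrix.mul_assoc]
      _ = (T⁻¹ * stdJ n) * D * T := by rw [J_transpose_symp hT]
      _ = T⁻¹ * (stdJ n * D) * T := by simp only [Matrix.mul_assoc]
  have hmat : x • (1 : Matrix (Fin n ⊕ Fin n) (Fin n ⊕ Fin n) ℝ) - stdJ n * D'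
      = T⁻¹ * (x • (1 : Matrix (Fin n ⊕ Fin n) (Fin n ⊕ Fin n) ℝ) - stdJ n * D) * T := by
    rw [Matrix.mul_sub, Matrix.sub_mul, hsim]
    congr 1
    rw [Matrix.mul_smul, Matrix.smul_mul, Matrix.mul_one, h2]
  rw [hmat, Matrix.det_mul, Matrix.det_mul, Matrix.det_nonsing_inv]
  rw [mul_comm, ← mul_assoc, mul_comm T.det, Ring.inverse_mul_cancel _ hu, one_mul]

lemma sorted_ofFn_sq {n : ℕ} (lam : Fin n → ℝ)
    (hpos : ∀ i, 0 < lam i) (hdec : ∀ i j : Fin n, i ≤ j → lam j ≤ lam i) :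
    (List.ofFn (fun i => lam i ^ 2)).Pairwise (· ≥ ·) := by
  rw [List.ofFn_eq_map]
  rw [List.pairwise_map]
  refine (List.pairwise_le_finRange n).imp ?_
  intro i j hij
  have h1 := hdec i j hij
  have h2 := hpos j
  nlinarith

lemma lam_eq_of_prod_eq {n : ℕ} (lam lam' : Fin n → ℝ)
    (hpos : ∀ i, 0 < lam i) (hpos' : ∀ i, 0 < lam' i)
    (hdec : ∀ i j : Fin n, i ≤ j → lam j ≤ lam i)
    (hdec' : ∀ i j : Fin n, i ≤ j → lam' j ≤ lam' i)
    (h : ∀ x : ℝ, 0 < x → ∏ i, (x + lam i ^ 2) = ∏ i, (x + lam' i ^ 2)) :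
    lam = lam' := by
  have hPQ : (∏ i, (X - C (-(lam i ^ 2))) : ℝ[X]) = ∏ i, (X - C (-(lam' i ^ 2))) := by
    rw [← sub_eq_zero]
    apply Polynomial.eq_zero_of_infinite_isRoot
    apply Set.Infinite.mono (s := Set.Ioi (0:ℝ)) ?_ (Set.Ioi_infinite 0)
    intro x hx
    have hx' : (0 : ℝ) < x := hx
    simp only [Set.mem_setOf_eq, Polynomial.IsRoot, Polynomial.eval_sub, Polynomial.eval_prod,
      Polynomial.eval_X, Polynomial.eval_C, sub_neg_eq_add]
    rw [h x hx', sub_self]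
  have hroots : ∀ (f : Fin n → ℝ),
      (∏ i, (X - C (-(f i ^ 2))) : ℝ[X]).roots
        = (Finset.univ.val.map fun i => -(f i ^ 2)) := by
    intro f
    rw [Finset.prod_eq_multiset_prod]
    have : Multiset.map (fun i => (X - C (-(f i ^ 2)) : ℝ[X])) Finset.univ.val
        = Multiset.map (fun r : ℝ => X - C r) (Multiset.map (fun i => -(f i ^ 2))
            Finset.univ.val) := by
      rw [Multiset.map_map]; rfl
    rw [this, Polynomial.roots_multiset_prod_X_sub_C]
  have hms := congrArg Polynomial.roots hPQ
  rw [hroots lam, hroots lam'] at hms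
  rw [Fin.univ_val_map, Fin.univ_val_map, Multiset.coe_eq_coe] at hms
  have hperm := hms.map (fun r : ℝ => -r)
  rw [List.map_ofFn, List.map_ofFn] at hperm
  have hperm' : (List.ofFn fun i => lam i ^ 2).Perm (List.ofFn fun i => lam' i ^ 2) := by
    convert hperm using 2 <;> funext i <;> simp [Function.comp]
  haveI : IsAntisymm ℝ (· ≥ ·) := ⟨fun a b h1 h2 => le_antisymm h2 h1⟩
  have hlist := List.Perm.eq_of_pairwise (fun a b _ _ h1 h2 => le_antisymm h2 h1)
    (sorted_ofFn_sq lam hpos hdec) (sorted_ofFn_sq lam' hpos' hdec') hperm'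
  have hsq : (fun i => lam i ^ 2) = fun i => lam' i ^ 2 := List.ofFn_inj.mp hlist
  funext i
  have h1 : lam i ^ 2 = lam' i ^ 2 := congrFun hsq i
  nlinarith [hpos i, hpos' i]

end Aux

theorem ellipsoid_symplectomorphic_iff {n : ℕ}
    (M M' : Matrix (Fin n ⊕ Fin n) (Fin n ⊕ Fin n) ℝ) (hM : M.PosDef) (hM' : M'.PosDef)
    (lam lam' : Fin n → ℝ)
    (hW : IsWilliamsonEigs M lam) (hW' : IsWilliamsonEigs M' lam')
    (hdec : ∀ i j : Fin n, i ≤ j → lam j ≤ lam i)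
    (hdec' : ∀ i j : Fin n, i ≤ j → lam' j ≤ lam' i) :
    (∃ A : Matrix (Fin n ⊕ Fin n) (Fin n ⊕ Fin n) ℝ, IsSymplectic A ∧
        (fun z => A.mulVec z) '' {z : (Fin n ⊕ Fin n) → ℝ | z ⬝ᵥ M'.mulVec z ≤ 1}
          = {z : (Fin n ⊕ Fin n) → ℝ | z ⬝ᵥ M.mulVec z ≤ 1}) ↔
      lam = lam' := by
  obtain ⟨hposl, S, hSsymp, hSM⟩ := hW
  obtain ⟨hposl', S', hS'symp, hS'M⟩ := hW'
  have hMsym : Mᵀ = M := hM.1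
  have hM'sym : M'ᵀ = M' := hM'.1
  have hMpos : ∀ z : (Fin n ⊕ Fin n) → ℝ, z ≠ 0 → 0 < z ⬝ᵥ M.mulVec z := by
    intro z hz
    simpa using hM.dotProduct_mulVec_pos hz
  have hM'pos : ∀ z : (Fin n ⊕ Fin n) → ℝ, z ≠ 0 → 0 < z ⬝ᵥ M'.mulVec z := by
    intro z hz
    simpa using hM'.dotProduct_mulVec_pos hz
  constructor
  · rintro ⟨A, hAsymp, himg⟩
    have huA := symp_isUnit_det hAsymp
    have hA1 : A * A⁻¹ = 1 := Matrix.mul_nonsing_inv A huA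
    have hA2 : A⁻¹ * A = 1 := Matrix.nonsing_inv_mul A huA
    -- A maps nonzero to nonzero
    have hAne : ∀ z : (Fin n ⊕ Fin n) → ℝ, z ≠ 0 → A.mulVec z ≠ 0 := by
      intro z hz h0
      apply hz
      have : A⁻¹.mulVec (A.mulVec z) = 0 := by rw [h0, Matrix.mulVec_zero]
      rwa [Matrix.mulVec_mulVec, hA2, Matrix.one_mulVec] at this
    -- forms comparison
    have hNpos : ∀ z : (Fin n ⊕ Fin n) → ℝ, z ≠ 0 → 0 < z ⬝ᵥ (Aᵀ * M * A).mulVec z := by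
      intro z hz
      rw [← quad_conj]
      exact hMpos _ (hAne z hz)
    have hball1 : ∀ z : (Fin n ⊕ Fin n) → ℝ,
        z ⬝ᵥ (Aᵀ * M * A).mulVec z ≤ 1 → z ⬝ᵥ M'.mulVec z ≤ 1 := by
      intro z hz
      rw [← quad_conj] at hz
      have hmem : A.mulVec z ∈ {z : (Fin n ⊕ Fin n) → ℝ | z ⬝ᵥ M.mulVec z ≤ 1} := hz
      rw [← himg] at hmem
      obtain ⟨w, hw, hwz⟩ := hmem
      have : w = z := by
        have := congrArg (fun v => A⁻¹.mulVec v) hwz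
        simpa [Matrix.mulVec_mulVec, hA2, Matrix.one_mulVec] using this
      rwa [← this]
    have hball2 : ∀ z : (Fin n ⊕ Fin n) → ℝ,
        z ⬝ᵥ M'.mulVec z ≤ 1 → z ⬝ᵥ (Aᵀ * M * A).mulVec z ≤ 1 := by
      intro z hz
      rw [← quad_conj]
      have : A.mulVec z ∈ (fun z => A.mulVec z) ''
          {z : (Fin n ⊕ Fin n) → ℝ | z ⬝ᵥ M'.mulVec z ≤ 1} := ⟨z, hz, rfl⟩
      rw [himg] at this
      exact this
    have hforms : ∀ z : (Fin n ⊕ Fin n) → ℝ,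
        z ⬝ᵥ (Aᵀ * M * A).mulVec z = z ⬝ᵥ M'.mulVec z := by
      intro z
      exact le_antisymm (ball_to_form hM'pos hball2 z) (ball_to_form hNpos hball1 z)
    have hNsym : (Aᵀ * M * A)ᵀ = Aᵀ * M * A := by
      rw [Matrix.transpose_mul, Matrix.transpose_mul, Matrix.transpose_transpose, hMsym,
        Matrix.mul_assoc]
    have hAMA : Aᵀ * M * A = M' := form_to_matrix hNsym hM'sym hforms
    -- conjugating matrix between the two diagonal forms
    have huS := symp_isUnit_det hSsymp
    have huS' := symp_isUnit_det hS'symp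
    have huSt : IsUnit Sᵀ.det := by rwa [Matrix.det_transpose]
    set T := S⁻¹ * (A * S') with hT
    have hTsymp : IsSymplectic T := symp_mul (symp_inv hSsymp) (symp_mul hAsymp hS'symp)
    have hTDT : Tᵀ * Dm lam * T = Dm lam' := by
      have e1 : Dm lam = Sᵀ * M * S := hSM.symm
      have e2 : Dm lam' = S'ᵀ * M' * S' := hS'M.symm
      rw [e1, e2, ← hAMA, hT]
      rw [Matrix.transpose_mul, Matrix.transpose_mul, Matrix.transpose_nonsing_inv]
      simp only [Matrix.mul_assoc]
      rw [Matrix.nonsing_inv_mul_cancel_left _ _ huSt,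
        Matrix.mul_nonsing_inv_cancel_left _ _ huS]
    have hprod : ∀ x : ℝ, 0 < x → ∏ i, (x + lam i ^ 2) = ∏ i, (x + lam' i ^ 2) := by
      intro x hx
      have hs : Real.sqrt x ≠ 0 := by positivity
      have h1 := det_shift_eq hTsymp hTDT (Real.sqrt x)
      rw [det_JD lam hs, det_JD lam' hs] at h1
      have hsq : Real.sqrt x ^ 2 = x := Real.sq_sqrt hx.le
      rw [hsq] at h1
      exact h1.symm
    exact lam_eq_of_prod_eq lam lam' hposl hposl' hdec hdec' hprod
  · intro hll
    subst hll
    have huS := symp_isUnit_det hSsymp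
    have huS' := symp_isUnit_det hS'symp
    have huS't : IsUnit S'ᵀ.det := by rwa [Matrix.det_transpose]
    refine ⟨S * S'⁻¹, symp_mul hSsymp (symp_inv hS'symp), ?_⟩
    set A := S * S'⁻¹ with hA
    have huA := symp_isUnit_det (symp_mul hSsymp (symp_inv hS'symp))
    have hA1 : A * A⁻¹ = 1 := Matrix.mul_nonsing_inv A huA
    have hA2 : A⁻¹ * A = 1 := Matrix.nonsing_inv_mul A huA
    have hAMA : Aᵀ * M * A = M' := by
      have key : S'ᵀ * ((Aᵀ * M * A) * S') = S'ᵀ * (M' * S') := by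
        have rhs : S'ᵀ * (M' * S') = Matrix.fromBlocks (Matrix.diagonal lam) 0 0
            (Matrix.diagonal lam) := by rw [← hS'M]; simp only [Matrix.mul_assoc]
        have lhs : S'ᵀ * ((Aᵀ * M * A) * S') = Matrix.fromBlocks (Matrix.diagonal lam) 0 0
            (Matrix.diagonal lam) := by
          rw [hA, Matrix.transpose_mul, Matrix.transpose_nonsing_inv, ← hSM]
          simp only [Matrix.mul_assoc]
          rw [Matrix.mul_nonsing_inv_cancel_left _ _ huS't,
            Matrix.nonsing_inv_mul _ huS', Matrix.mul_one]
        rw [lhs, rhs]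
      have k2 : (Aᵀ * M * A) * S' = M' * S' := by
        have h := congrArg (fun Z => S'ᵀ⁻¹ * Z) key
        simpa only [Matrix.nonsing_inv_mul_cancel_left _ _ huS't] using h
      have h := congrArg (fun Z => Z * S'⁻¹) k2
      simpa only [Matrix.mul_nonsing_inv_cancel_right _ _ huS'] using h
    ext z
    simp only [Set.mem_image, Set.mem_setOf_eq]
    constructor
    · rintro ⟨w, hw, rfl⟩
      rw [quad_conj, hAMA]
      exact hw
    · intro hz
      refine ⟨A⁻¹.mulVec z, ?_, ?_⟩
      · rw [← hAMA, ← quad_conj]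
        rw [Matrix.mulVec_mulVec, hA1, Matrix.one_mulVec]
        exact hz
      · rw [Matrix.mulVec_mulVec, hA1, Matrix.one_mulVec]
end

section
/- (Linear Gromov non-squeezing) Let R > r > 0. There is no affine symplectomorphism φ(z) = Az + b, with A ∈ Sp(2n,ℝ) and b ∈ ℝ^{2n}, mapping the open ball B(R) = {z ∈ ℝ^{2n} : |z|² < R²} into the cylinder Z(r) = {(x,p) ∈ ℝ^{2n} : x₁² + p₁² < r²}. -/
open Matrix MeasureTheory BigOperators

/-- Auxiliary: if `∑ u i ^ 2 ≥ 1`, then for `t > 0` there is `z` with `∑ z i ^ 2 = t ^ 2`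
and `t ^ 2 ≤ (∑ u i * z i + c) ^ 2`. -/
lemma aux_vec {ι : Type*} [Fintype ι] (u : ι → ℝ) (c t : ℝ) (ht : 0 < t)
    (hu : 1 ≤ ∑ i, u i ^ 2) :
    ∃ z : ι → ℝ, (∑ i, z i ^ 2) = t ^ 2 ∧ t ^ 2 ≤ (∑ i, u i * z i + c) ^ 2 := by
  set S : ℝ := ∑ i, u i ^ 2 with hS
  have hS1 : (1 : ℝ) ≤ S := hu
  have hSpos : 0 < S := lt_of_lt_of_le one_pos hS1
  set s : ℝ := Real.sqrt S with hs
  have hspos : 0 < s := Real.sqrt_pos.mpr hSpos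
  have hs2 : s ^ 2 = S := Real.sq_sqrt hSpos.le
  have hs1 : (1 : ℝ) ≤ s := by
    nlinarith [hs2, hspos]
  set ε : ℝ := if 0 ≤ c then 1 else -1 with hε
  have hε2 : ε ^ 2 = 1 := by
    by_cases h : 0 ≤ c <;> simp [hε, h]
  have hεc : 0 ≤ ε * c := by
    by_cases h : 0 ≤ c
    · simp only [hε, if_pos h, one_mul]; exact h
    · push_neg at h
      simp only [hε, if_neg (not_le.mpr h), neg_one_mul]
      linarith
  refine ⟨fun i => ε * (t / s) * u i, ?_, ?_⟩
  · have : (∑ i, (ε * (t / s) * u i) ^ 2) = (ε * (t / s)) ^ 2 * S := by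
      rw [hS, Finset.mul_sum]; congr 1; ext i; ring
    rw [this, mul_pow, hε2, one_mul, div_pow, hs2]
    field_simp
  · have hsum : (∑ i, u i * (ε * (t / s) * u i)) = ε * (t / s) * S := by
      rw [hS, Finset.mul_sum]; congr 1; ext i; ring
    rw [hsum]
    have hkey : ε * (t / s) * S = ε * (t * s) := by
      rw [← hs2]; field_simp
    rw [hkey]
    have h1 : (ε * (t * s) + c) ^ 2 = ε ^ 2 * (t * s) ^ 2 + 2 * (t * s) * (ε * c) + c ^ 2 := by
      ring
    rw [hε2] at h1
    nlinarith [sq_nonneg c, mul_nonneg (mul_nonneg ht.le hspos.le) hεc, hs2, hS1, sq_nonneg t]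

theorem linear_gromov_nonsqueezing {n : ℕ} (hn : 0 < n) (R r : ℝ)
    (hr : 0 < r) (hR : r < R) :
    ¬ ∃ (A : Matrix (Fin n ⊕ Fin n) (Fin n ⊕ Fin n) ℝ) (b : (Fin n ⊕ Fin n) → ℝ),
        IsSymplectic A ∧
        ∀ z : (Fin n ⊕ Fin n) → ℝ, (∑ i, z i ^ 2) < R ^ 2 →
          (A.mulVec z + b) (Sum.inl ⟨0, hn⟩) ^ 2
            + (A.mulVec z + b) (Sum.inr ⟨0, hn⟩) ^ 2 < r ^ 2 := by
  rintro ⟨A, b, hA, H⟩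
  set i0 : Fin n := ⟨0, hn⟩
  -- A is in the symplectic group (Mathlib's J is -stdJ)
  have hJ : Matrix.J (Fin n) ℝ = -(stdJ n) := by
    simp [Matrix.J, stdJ, Matrix.fromBlocks_neg]
  have hmemT : Aᵀ ∈ Matrix.symplecticGroup (Fin n) ℝ := by
    rw [SymplecticGroup.mem_iff]
    have : Aᵀ * (-(stdJ n)) * Aᵀᵀ = -(stdJ n) := by
      rw [Matrix.transpose_transpose]
      have := hA
      unfold IsSymplectic at this
      rw [Matrix.mul_neg, Matrix.neg_mul, this]
    rw [hJ]; exact this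
  have hmem : A ∈ Matrix.symplecticGroup (Fin n) ℝ :=
    SymplecticGroup.transpose_mem_iff.mp hmemT
  have hAJA : A * stdJ n * Aᵀ = stdJ n := by
    have := SymplecticGroup.mem_iff.mp hmem
    rw [hJ] at this
    have h2 : -(A * stdJ n * Aᵀ) = -(stdJ n) := by
      rw [← this]; rw [Matrix.mul_neg, Matrix.neg_mul]
    exact neg_injective h2
  set u : (Fin n ⊕ Fin n) → ℝ := A (Sum.inl i0)
  set v : (Fin n ⊕ Fin n) → ℝ := A (Sum.inr i0)
  -- entry computation: ω(u, v) = 1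
  have hω : (∑ j, (u (Sum.inl j) * v (Sum.inr j) - u (Sum.inr j) * v (Sum.inl j))) = 1 := by
    have h := congrFun (congrFun hAJA (Sum.inl i0)) (Sum.inr i0)
    have hRHS : stdJ n (Sum.inl i0) (Sum.inr i0) = 1 := by
      simp [stdJ, Matrix.fromBlocks]
    rw [hRHS] at h
    rw [← h]
    rw [Matrix.mul_apply]
    have hAJ : ∀ k, (A * stdJ n) (Sum.inl i0) k =
        Sum.elim (fun j => -u (Sum.inr j)) (fun j => u (Sum.inl j)) k := by
      intro k
      rw [Matrix.mul_apply]
      cases k with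
      | inl j =>
        rw [Fintype.sum_sum_type]
        simp [stdJ, Matrix.fromBlocks, Matrix.one_apply, u, Finset.sum_ite_eq',
          Matrix.neg_apply]
      | inr j =>
        rw [Fintype.sum_sum_type]
        simp [stdJ, Matrix.fromBlocks, Matrix.one_apply, u, Finset.sum_ite_eq',
          Matrix.neg_apply]
    rw [Fintype.sum_sum_type]
    simp only [hAJ, Sum.elim_inl, Sum.elim_inr, Matrix.transpose_apply]
    have e1 : ∑ j, -u (Sum.inr j) * A (Sum.inr i0) (Sum.inl j)
        = -∑ j, u (Sum.inr j) * v (Sum.inl j) := by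
      rw [← Finset.sum_neg_distrib]
      exact Finset.sum_congr rfl fun j _ => by simp only [v]; ring
    have e2 : ∑ j, u (Sum.inl j) * A (Sum.inr i0) (Sum.inr j)
        = ∑ j, u (Sum.inl j) * v (Sum.inr j) := rfl
    rw [Finset.sum_sub_distrib, e1, e2]
    ring
  -- Cauchy-Schwarz: 1 ≤ (∑ u²) * (∑ v²)
  have hCS : (1 : ℝ) ≤ (∑ i, u i ^ 2) * (∑ i, v i ^ 2) := by
    set w : (Fin n ⊕ Fin n) → ℝ := Sum.elim (fun j => v (Sum.inr j)) (fun j => -v (Sum.inl j))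
    have huw : (∑ i, u i * w i) = 1 := by
      rw [Fintype.sum_sum_type]
      simp only [w, Sum.elim_inl, Sum.elim_inr]
      have e1 : ∑ j, u (Sum.inr j) * -v (Sum.inl j)
          = -∑ j, u (Sum.inr j) * v (Sum.inl j) := by
        rw [← Finset.sum_neg_distrib]
        exact Finset.sum_congr rfl fun j _ => by ring
      rw [e1, ← hω, Finset.sum_sub_distrib]
      ring
    have hw2 : (∑ i, w i ^ 2) = ∑ i, v i ^ 2 := by
      rw [Fintype.sum_sum_type, Fintype.sum_sum_type (f := fun i => v i ^ 2)]
      simp only [w, Sum.elim_inl, Sum.elim_inr, neg_sq]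
      rw [add_comm]
    have := Finset.sum_mul_sq_le_sq_mul_sq Finset.univ u w
    rw [huw, hw2] at this
    simpa using this
  -- one of the two sums is ≥ 1
  have hone : (1 : ℝ) ≤ (∑ i, u i ^ 2) ∨ (1 : ℝ) ≤ (∑ i, v i ^ 2) := by
    by_contra h
    push_neg at h
    obtain ⟨h1, h2⟩ := h
    have hu0 : 0 ≤ ∑ i, u i ^ 2 := Finset.sum_nonneg fun i _ => sq_nonneg _
    have hv0 : 0 ≤ ∑ i, v i ^ 2 := Finset.sum_nonneg fun i _ => sq_nonneg _
    nlinarith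
  set t : ℝ := (r + R) / 2 with htdef
  have ht : 0 < t := by simp only [htdef]; linarith
  have htr : r < t := by linarith
  have htR : t < R := by linarith
  have ht2R : t ^ 2 < R ^ 2 := by nlinarith
  have hr2t : r ^ 2 < t ^ 2 := by nlinarith
  cases hone with
  | inl hu =>
    obtain ⟨z, hz1, hz2⟩ := aux_vec u (b (Sum.inl i0)) t ht hu
    have hball : (∑ i, z i ^ 2) < R ^ 2 := by rw [hz1]; exact ht2R
    have := H z hball
    have hmv : (A.mulVec z + b) (Sum.inl i0) = ∑ i, u i * z i + b (Sum.inl i0) := by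
      simp [Matrix.mulVec, dotProduct, u, Pi.add_apply]
    rw [hmv] at this
    nlinarith [sq_nonneg ((A.mulVec z + b) (Sum.inr i0))]
  | inr hv =>
    obtain ⟨z, hz1, hz2⟩ := aux_vec v (b (Sum.inr i0)) t ht hv
    have hball : (∑ i, z i ^ 2) < R ^ 2 := by rw [hz1]; exact ht2R
    have := H z hball
    have hmv : (A.mulVec z + b) (Sum.inr i0) = ∑ i, v i * z i + b (Sum.inr i0) := by
      simp [Matrix.mulVec, dotProduct, v, Pi.add_apply]
    rw [hmv] at this
    nlinarith [sq_nonneg ((A.mulVec z + b) (Sum.inl i0))]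
end
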